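/- Let δ > 0 and let W : ℝ³ → [0,∞) be a continuous even function, not identically zero, supported in the closed unit ball of ℝ³. Let A ≥ 3^{3/2} c_δ^{-1/2} e^{δ/2} / ‖W‖_{L¹}, and let v₀ : ℝ³ → [0,∞) be measurable with v₀(ξ) ≥ A·W(ξ) for all ξ. If v : [0,δ/2] × ℝ³ → [0,∞) solves the Fourier-side cubic heat integral equation with datum v₀, then ∫_{ℝ³} v(δ/2, ξ) dξ = ∞; in particular v(δ/2,·) is not integrable, so there is no such solution v with v(t,·) ∈ L¹(ℝ³) for every t ∈ [0, δ/2]. -/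

import Mathlib

open MeasureTheory

noncomputable section

/-- `ℝ³` as Euclidean space. -/
abbrev E3 := EuclideanSpace ℝ (Fin 3)

/-- Convolution of two `[0,∞]`-valued functions on `ℝ³` (lower Lebesgue integral). -/
def lconv (f g : E3 → ENNReal) : E3 → ENNReal := fun ξ => ∫⁻ y, f y * g (ξ - y)

/-- The triple convolution `f * f * f` of a `[0,∞]`-valued function on `ℝ³`. -/
def lconv3 (f : E3 → ENNReal) : E3 → ENNReal := lconv (lconv f f) f

/-- `v` solves the Fourier-side cubic heat integral equation on `[0,T]` with datum `v₀`. -/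
def SolvesFourierCubic (T : ℝ) (v₀ : E3 → ℝ) (v : ℝ → E3 → ℝ) : Prop :=
  ∀ t ∈ Set.Icc (0 : ℝ) T, ∀ ξ : E3,
    ENNReal.ofReal (v t ξ) =
      ENNReal.ofReal (Real.exp (-t * ‖ξ‖ ^ 2) * v₀ ξ) +
        ∫⁻ s in Set.Ioo (0 : ℝ) t,
          ENNReal.ofReal (Real.exp (-(t - s) * ‖ξ‖ ^ 2)) *
            lconv3 (fun y => ENNReal.ofReal (v s y)) ξ

/-- `c_δ = 1 - e^{-4δ}`. -/
def cDelta (δ : ℝ) : ℝ := 1 - Real.exp (-4 * δ)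

namespace Stmt8Aux

lemma lconv_mono {f f' g g' : E3 → ENNReal} (hf : ∀ x, f x ≤ f' x) (hg : ∀ x, g x ≤ g' x) :
    ∀ ξ, lconv f g ξ ≤ lconv f' g' ξ :=
  fun _ => lintegral_mono fun y => mul_le_mul' (hf y) (hg _)

lemma lconv3_mono {f f' : E3 → ENNReal} (hf : ∀ x, f x ≤ f' x) :
    ∀ ξ, lconv3 f ξ ≤ lconv3 f' ξ :=
  fun ξ => lconv_mono (lconv_mono hf hf) hf ξ

lemma lconv_measurable {f g : E3 → ENNReal} (hf : Measurable f) (hg : Measurable g) :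
    Measurable (lconv f g) := by
  apply Measurable.lintegral_prod_right
  exact (hf.comp measurable_snd).mul (hg.comp (measurable_fst.sub measurable_snd))

lemma lintegral_lconv {f g : E3 → ENNReal} (hf : Measurable f) (hg : Measurable g) :
    ∫⁻ ξ, lconv f g ξ = (∫⁻ y, f y) * ∫⁻ y, g y := by
  unfold lconv
  rw [lintegral_lintegral_swap]
  · have : ∀ y : E3, ∫⁻ ξ, f y * g (ξ - y) = f y * ∫⁻ z, g z := by
      intro y
      have hgm : Measurable fun ξ : E3 => g (ξ - y) := hg.comp (measurable_id.sub measurable_const)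
      rw [lintegral_const_mul _ hgm]
      congr 1
      exact (measurePreserving_sub_right volume y).lintegral_comp hg
    simp_rw [this]
    rw [lintegral_mul_const _ hf]
  · exact ((hf.comp measurable_snd).mul (hg.comp (measurable_fst.sub measurable_snd))).aemeasurable

lemma lconv_supp {f g : E3 → ENNReal} {r s : ℝ}
    (hf : ∀ y, r < ‖y‖ → f y = 0) (hg : ∀ y, s < ‖y‖ → g y = 0)
    {ξ : E3} (hξ : r + s < ‖ξ‖) : lconv f g ξ = 0 := by
  unfold lconv
  rw [show (0:ENNReal) = ∫⁻ _ : E3, 0 by simp]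
  apply lintegral_congr
  intro y
  rcases le_or_gt ‖y‖ r with h | h
  · rw [hg, mul_zero]
    have : ‖ξ‖ - ‖y‖ ≤ ‖ξ - y‖ := by
      have := norm_sub_norm_le ξ y; linarith [this]
    linarith
  · rw [hf y h, zero_mul]

lemma lconv_const_mul (c d : ENNReal) (hc : c ≠ ⊤) (hd : d ≠ ⊤) (f g : E3 → ENNReal) :
    lconv (fun y => c * f y) (fun y => d * g y) = fun ξ => (c * d) * lconv f g ξ := by
  funext ξ
  unfold lconv
  rw [← lintegral_const_mul' (c * d) _ (ENNReal.mul_ne_top hc hd)]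
  apply lintegral_congr; intro y; ring

lemma lconv3_const_mul (c : ENNReal) (hc : c ≠ ⊤) (f : E3 → ENNReal) :
    lconv3 (fun y => c * f y) = fun ξ => c ^ 3 * lconv3 f ξ := by
  unfold lconv3
  rw [lconv_const_mul c c hc hc f f,
    lconv_const_mul (c * c) c (ENNReal.mul_ne_top hc hc) hc (lconv f f) f]
  funext ξ; ring

lemma exp_integral_lb {a t M c4 : ℝ} (hM : 0 < M) (hat : a < t)
    (h4 : c4 ≤ (t - a) * M) :
    ENNReal.ofReal ((1 - Real.exp (-c4)) / M) ≤
      ∫⁻ s in Set.Ioo a t, ENNReal.ofReal (Real.exp (-(t - s) * M)) := by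
  have hgc : Continuous fun s : ℝ => Real.exp (-(t - s) * M) := by continuity
  have hint : IntegrableOn (fun s : ℝ => Real.exp (-(t - s) * M)) (Set.Ioo a t) := by
    exact (hgc.integrableOn_Icc (a := a) (b := t)).mono_set Set.Ioo_subset_Icc_self
  rw [← ofReal_integral_eq_lintegral_ofReal hint
      (Filter.Eventually.of_forall fun s => (Real.exp_pos _).le)]
  apply ENNReal.ofReal_le_ofReal
  have hval : ∫ s in Set.Ioo a t, Real.exp (-(t - s) * M) =
      (1 - Real.exp (-(t - a) * M)) / M := by
    rw [← integral_Ioc_eq_integral_Ioo, ← intervalIntegral.integral_of_le hat.le]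
    have key : ∀ s ∈ Set.uIcc a t, HasDerivAt (fun u : ℝ => Real.exp (-(t - u) * M) / M)
        (Real.exp (-(t - s) * M)) s := by
      intro s _
      have h0 : HasDerivAt (fun u : ℝ => -(t - u) * M) (1 * M) s := by
        have := ((hasDerivAt_id s).sub_const t).mul_const M
        refine this.congr_of_eventuallyEq (Filter.Eventually.of_forall fun u => ?_)
        · simp only [id]; ring
      have h1 := (h0.exp).div_const M
      refine h1.congr_deriv ?_
      rw [one_mul, mul_div_assoc, div_self hM.ne', mul_one]
    rw [intervalIntegral.integral_eq_sub_of_hasDerivAt key (hgc.intervalIntegrable a t)]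
    field_simp
    simp
  rw [hval]
  have h1 : Real.exp (-(t - a) * M) ≤ Real.exp (-c4) := Real.exp_le_exp.mpr (by linarith)
  exact (div_le_div_iff_of_pos_right hM).mpr (by linarith)

/-- iterated triple self-convolution of `ofReal ∘ W`. -/
def fseq (W : E3 → ℝ) : ℕ → E3 → ENNReal
  | 0 => fun ξ => ENNReal.ofReal (W ξ)
  | (k+1) => lconv3 (fseq W k)

/-- lower-bound coefficients. -/
def bseq (δ A : ℝ) : ℕ → ℝ
  | 0 => A * Real.exp (-(δ / 2))
  | (k+1) => cDelta δ / 9 ^ (k+1) * bseq δ A k ^ 3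

/-- the times `t_k = (δ/2)(1 - 9^{-k})`. -/
def tkr (δ : ℝ) (k : ℕ) : ℝ := δ / 2 * (1 - (1/9 : ℝ) ^ k)

end Stmt8Aux

set_option maxHeartbeats 2000000 in
open Stmt8Aux in
theorem stmt_8 (δ A : ℝ) (hδ : 0 < δ)
    (W : E3 → ℝ) (hWcont : Continuous W) (hWnonneg : ∀ ξ, 0 ≤ W ξ)
    (hWeven : ∀ ξ, W (-ξ) = W ξ) (hWne : W ≠ 0)
    (hWsupp : Function.support W ⊆ Metric.closedBall 0 1)
    (hA : (3 : ℝ) ^ ((3 : ℝ) / 2) * cDelta δ ^ (-(1 : ℝ) / 2) * Real.exp (δ / 2) /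
        (∫ ξ, W ξ) ≤ A)
    (v₀ : E3 → ℝ) (hv₀meas : Measurable v₀) (hv₀nonneg : ∀ ξ, 0 ≤ v₀ ξ)
    (hv₀ge : ∀ ξ, A * W ξ ≤ v₀ ξ)
    (v : ℝ → E3 → ℝ) (hvmeas : Measurable (Function.uncurry v))
    (hvnonneg : ∀ t ξ, 0 ≤ v t ξ)
    (hsol : SolvesFourierCubic (δ / 2) v₀ v) :
    ∫⁻ ξ, ENNReal.ofReal (v (δ / 2) ξ) = ⊤ := by
  -- basic facts about W
  set I : ℝ := ∫ ξ, W ξ with hI_def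
  have hWcs : HasCompactSupport W := by
    apply HasCompactSupport.intro (isCompact_closedBall (0:E3) 1)
    intro x hx
    by_contra h
    exact hx (hWsupp (Function.mem_support.mpr h))
  have hWint : Integrable W := hWcont.integrable_of_hasCompactSupport hWcs
  have hI : 0 < I := by
    rw [hI_def]
    rw [integral_pos_iff_support_of_nonneg (fun ξ => hWnonneg ξ) hWint]
    have hopen : IsOpen (Function.support W) := hWcont.isOpen_support
    have hne : (Function.support W).Nonempty := Function.support_nonempty_iff.mpr hWne
    exact hopen.measure_pos volume hne
  -- facts about cDelta
  set c : ℝ := cDelta δ with hc_def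
  have hc0 : 0 < c := by
    rw [hc_def]; unfold cDelta
    have : Real.exp (-4 * δ) < 1 := by
      rw [Real.exp_lt_one_iff]; linarith
    linarith
  have hc1 : c ≤ 1 := by
    rw [hc_def]; unfold cDelta
    have := Real.exp_pos (-4 * δ); linarith
  -- A is positive
  have hA0 : 0 < A := by
    refine lt_of_lt_of_le ?_ hA
    apply div_pos
    · apply mul_pos (mul_pos ?_ ?_) (Real.exp_pos _)
      · positivity
      · exact Real.rpow_pos_of_pos hc0 _
    · exact hI
  -- positivity of bseq
  have hb_pos : ∀ k, 0 < bseq δ A k := by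
    intro k; induction k with
    | zero => exact mul_pos hA0 (Real.exp_pos _)
    | succ k ih =>
      show 0 < c / 9 ^ (k+1) * bseq δ A k ^ 3
      positivity
  -- the key numeric inequality : bseq k * I ^ (3^k) ≥ 3^k
  have key_num : ∀ k : ℕ, (3:ℝ) ^ k ≤ bseq δ A k * I ^ (3 ^ k) := by
    set s : ℝ := Real.sqrt (c / 27) with hs_def
    have hs0 : 0 < s := Real.sqrt_pos.mpr (by positivity)
    have hs1 : s ≤ 1 := by
      rw [hs_def]
      rw [show (1:ℝ) = Real.sqrt 1 by simp]
      apply Real.sqrt_le_sqrt; linarith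
    have hs2 : s ^ 2 = c / 27 := Real.sq_sqrt (by positivity)
    have hgg : ∀ k : ℕ, 1 ≤ bseq δ A k * I ^ (3 ^ k) * s / 3 ^ k := by
      intro k; induction k with
      | zero =>
        simp only [pow_zero, pow_one, div_one]
        -- from hA : 3^(3/2) * c^(-1/2) * exp(δ/2) / I ≤ A
        have h32 : (3:ℝ) ^ ((3:ℝ)/2) = Real.sqrt 27 := by
          rw [show (27:ℝ) = 3 ^ (3:ℕ) by norm_num, Real.sqrt_eq_rpow,
            ← Real.rpow_natCast 3 3, ← Real.rpow_mul (by norm_num)]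
          norm_num
        have hcm : c ^ (-(1:ℝ)/2) = 1 / Real.sqrt c := by
          rw [show (-(1:ℝ)/2) = -(1/2 : ℝ) by norm_num, Real.rpow_neg hc0.le,
            ← Real.sqrt_eq_rpow]
          rw [one_div]
        have hsc : s = Real.sqrt c / Real.sqrt 27 := by
          rw [hs_def, Real.sqrt_div hc0.le]
        have hA' : Real.sqrt 27 * (1 / Real.sqrt c) * Real.exp (δ/2) / I ≤ A := by
          rw [← h32, ← hcm]; exact hA
        have hsqc : Real.sqrt c ≠ 0 := by positivity
        have hsq27 : Real.sqrt 27 ≠ (0:ℝ) := by positivity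
        have hIne : I ≠ 0 := hI.ne'
        have hexp : Real.exp (δ/2) ≠ 0 := (Real.exp_pos _).ne'
        calc (1:ℝ) = (Real.sqrt 27 * (1 / Real.sqrt c) * Real.exp (δ/2) / I) *
              Real.exp (-(δ/2)) * I * s := by
              rw [hsc, Real.exp_neg]; field_simp
          _ ≤ A * Real.exp (-(δ/2)) * I * s := by
              have he : (0:ℝ) < Real.exp (-(δ/2)) := Real.exp_pos _
              gcongr
          _ = bseq δ A 0 * I * s := by show _ = A * Real.exp (-(δ/2)) * I * s; ring
      | succ k ih =>
        have hrec : bseq δ A (k+1) * I ^ (3 ^ (k+1)) * s / 3 ^ (k+1)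
            = (bseq δ A k * I ^ (3 ^ k) * s / 3 ^ k) ^ 3 := by
          show c / 9 ^ (k+1) * bseq δ A k ^ 3 * I ^ (3 ^ (k+1)) * s / 3 ^ (k+1) = _
          have h9 : (9:ℝ) ^ (k+1) = 3 ^ (k+1) * 3 ^ (k+1) := by
            rw [← mul_pow]; norm_num
          have hI3 : I ^ (3 ^ (k+1)) = (I ^ (3 ^ k)) ^ 3 := by
            rw [← pow_mul, pow_succ]
          rw [hI3, h9]
          have h3 : (3:ℝ) ^ (k+1) ≠ 0 := by positivity
          have h3k : (3:ℝ) ^ k ≠ 0 := by positivity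
          have hc27 : c = 27 * s ^ 2 := by rw [hs2]; ring
          rw [hc27]
          field_simp
          ring
        rw [hrec]
        calc (1:ℝ) = 1 ^ 3 := by norm_num
          _ ≤ _ := by gcongr <;> norm_num
    intro k
    have h3k : (0:ℝ) < 3 ^ k := by positivity
    have h' := (one_le_div h3k).mp (hgg k)
    have hX0 : (0:ℝ) ≤ bseq δ A k * I ^ (3 ^ k) := by
      exact mul_nonneg (hb_pos k).le (by positivity)
    nlinarith [h', hs1, hs0, hX0]
  -- measurability of fseq
  have hf_meas : ∀ k, Measurable (fseq W k) := by
    intro k; induction k with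
    | zero => exact ENNReal.measurable_ofReal.comp hWcont.measurable
    | succ k ih => exact lconv_measurable (lconv_measurable ih ih) ih
  -- support of fseq
  have hf_supp : ∀ k, ∀ ξ : E3, (3:ℝ) ^ k < ‖ξ‖ → fseq W k ξ = 0 := by
    intro k; induction k with
    | zero =>
      intro ξ hξ
      show ENNReal.ofReal (W ξ) = 0
      rw [ENNReal.ofReal_eq_zero]
      rcases eq_or_ne (W ξ) 0 with h | h
      · rw [h]
      · exfalso
        have hb := hWsupp (Function.mem_support.mpr h)
        rw [Metric.mem_closedBall, dist_zero_right] at hb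
        simp only [pow_zero] at hξ; linarith
    | succ k ih =>
      intro ξ hξ
      show lconv (lconv _ _) _ ξ = 0
      apply lconv_supp (r := (3:ℝ)^k + 3^k) (s := (3:ℝ)^k)
      · intro y hy; exact lconv_supp ih ih hy
      · exact ih
      · have h3 : (3:ℝ)^(k+1) = 3^k + 3^k + 3^k := by ring
        linarith
  -- integral of fseq
  have hf_int : ∀ k, ∫⁻ ξ, fseq W k ξ = (ENNReal.ofReal I) ^ (3 ^ k) := by
    intro k; induction k with
    | zero =>
      show ∫⁻ ξ, ENNReal.ofReal (W ξ) = _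
      rw [← ofReal_integral_eq_lintegral_ofReal hWint (Filter.Eventually.of_forall hWnonneg)]
      simp [hI_def]
    | succ k ih =>
      show ∫⁻ ξ, lconv (lconv (fseq W k) (fseq W k)) (fseq W k) ξ = _
      rw [lintegral_lconv (lconv_measurable (hf_meas k) (hf_meas k)) (hf_meas k),
        lintegral_lconv (hf_meas k) (hf_meas k), ih]
      rw [pow_succ, pow_mul]
      ring
  -- facts about tkr
  have htk0 : tkr δ 0 = 0 := by simp [tkr]
  have h19 : (0:ℝ) ≤ (1/9:ℝ) := by norm_num
  have h19' : (1/9:ℝ) ≤ 1 := by norm_num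
  have htk_nonneg : ∀ k, 0 ≤ tkr δ k := by
    intro k
    have := pow_le_one₀ h19 h19' (n := k)
    unfold tkr; nlinarith
  have htk_le : ∀ k, tkr δ k ≤ δ / 2 := by
    intro k
    have h1 : (0:ℝ) ≤ (1/9:ℝ)^k := by positivity
    unfold tkr; nlinarith
  have htk_lt : ∀ k, tkr δ k < tkr δ (k+1) := by
    intro k
    unfold tkr
    have h1 : (1/9:ℝ)^(k+1) < (1/9:ℝ)^k := by
      apply pow_lt_pow_right_of_lt_one₀ (by norm_num) (by norm_num)
      omega
    nlinarith
  have htk_gap : ∀ k, (tkr δ (k+1) - tkr δ k) * 9 ^ (k+1) = 4 * δ := by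
    intro k
    unfold tkr
    have h9 : (9:ℝ)^k ≠ 0 := by positivity
    have h9' : (1/9:ℝ)^k * 9^k = 1 := by rw [← mul_pow]; norm_num
    field_simp
    linear_combination 8 * h9'
  -- main induction: pointwise lower bounds for v
  have key : ∀ k, ∀ t, tkr δ k ≤ t → t ≤ δ/2 → ∀ ξ,
      ENNReal.ofReal (bseq δ A k) * fseq W k ξ ≤ ENNReal.ofReal (v t ξ) := by
    intro k
    induction k with
    | zero =>
      intro t ht0 ht1 ξ
      rw [htk0] at ht0
      have heq := hsol t ⟨ht0, ht1⟩ ξ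
      rw [heq]
      refine le_trans ?_ le_self_add
      show ENNReal.ofReal (A * Real.exp (-(δ/2))) * ENNReal.ofReal (W ξ) ≤ _
      rw [← ENNReal.ofReal_mul (mul_pos hA0 (Real.exp_pos _)).le]
      apply ENNReal.ofReal_le_ofReal
      rcases eq_or_ne (W ξ) 0 with h | h
      · rw [h, mul_zero]; exact mul_nonneg (Real.exp_pos _).le (hv₀nonneg ξ)
      · have hball := hWsupp (Function.mem_support.mpr h)
        rw [Metric.mem_closedBall, dist_zero_right] at hball
        have hexp : Real.exp (-(δ/2)) ≤ Real.exp (-t * ‖ξ‖^2) := by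
          apply Real.exp_le_exp.mpr
          have h1 : t * ‖ξ‖^2 ≤ t * 1 := by
            apply mul_le_mul_of_nonneg_left ?_ ht0
            nlinarith [norm_nonneg ξ]
          nlinarith
        calc A * Real.exp (-(δ/2)) * W ξ ≤ A * Real.exp (-t * ‖ξ‖^2) * W ξ := by
              apply mul_le_mul_of_nonneg_right
                (mul_le_mul_of_nonneg_left hexp hA0.le) (hWnonneg ξ)
          _ ≤ Real.exp (-t * ‖ξ‖^2) * v₀ ξ := by
              have h2 := hv₀ge ξ
              nlinarith [Real.exp_pos (-t * ‖ξ‖^2), hWnonneg ξ]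
    | succ k ih =>
      intro t ht0 ht1 ξ
      rcases eq_or_ne (fseq W (k+1) ξ) 0 with hze | hze
      · rw [hze, mul_zero]; exact zero_le
      have hξn : ‖ξ‖ ≤ 3 ^ (k+1) := by
        by_contra h
        push_neg at h
        exact hze (hf_supp (k+1) ξ h)
      have h0t : 0 ≤ t := le_trans (htk_nonneg (k+1)) ht0
      have heq := hsol t ⟨h0t, ht1⟩ ξ
      rw [heq]
      set M : ℝ := (9:ℝ) ^ (k+1) with hM_def
      have hM0 : (0:ℝ) < M := by positivity
      have hnorm2 : ‖ξ‖^2 ≤ M := by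
        have h32 : ((3:ℝ)^(k+1))^2 = M := by
          rw [hM_def, ← pow_mul, mul_comm, pow_mul]; norm_num
        nlinarith [norm_nonneg ξ]
      set C : ENNReal := ENNReal.ofReal (bseq δ A k) ^ 3 * fseq W (k+1) ξ with hC_def
      have hsub : Set.Ioo (tkr δ k) t ⊆ Set.Ioo 0 t :=
        Set.Ioo_subset_Ioo (htk_nonneg k) le_rfl
      have hpt : ∀ s ∈ Set.Ioo (tkr δ k) t,
          ENNReal.ofReal (Real.exp (-(t - s) * M)) * C
            ≤ ENNReal.ofReal (Real.exp (-(t - s) * ‖ξ‖^2)) *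
                lconv3 (fun y => ENNReal.ofReal (v s y)) ξ := by
        intro s hs
        apply mul_le_mul'
        · apply ENNReal.ofReal_le_ofReal
          apply Real.exp_le_exp.mpr
          have hts : 0 ≤ t - s := by linarith [hs.2]
          nlinarith
        · have hsk : tkr δ k ≤ s := hs.1.le
          have hsd : s ≤ δ/2 := le_trans hs.2.le ht1
          have h2 := lconv3_mono (ih s hsk hsd) ξ
          simp only [lconv3_const_mul _ ENNReal.ofReal_ne_top (fseq W k)] at h2
          exact h2
      have hmeas : Measurable fun s : ℝ => ENNReal.ofReal (Real.exp (-(t - s) * M)) := by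
        apply Measurable.ennreal_ofReal
        exact (Real.continuous_exp.comp (by continuity)).measurable
      have hat : tkr δ k < t := lt_of_lt_of_le (htk_lt k) ht0
      have h4 : 4 * δ ≤ (t - tkr δ k) * M := by
        have hg := htk_gap k
        have hge : 0 ≤ t - tkr δ (k+1) := sub_nonneg.mpr ht0
        nlinarith [mul_nonneg hge hM0.le]
      have hlb := exp_integral_lb hM0 hat h4
      have hcd : (1 - Real.exp (-(4*δ))) = cDelta δ := by
        unfold cDelta; norm_num
      rw [hcd] at hlb
      calc ENNReal.ofReal (bseq δ A (k+1)) * fseq W (k+1) ξ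
          = ENNReal.ofReal (cDelta δ / M) * C := by
            rw [hC_def, ← mul_assoc, ← ENNReal.ofReal_pow (hb_pos k).le,
              ← ENNReal.ofReal_mul (div_nonneg hc0.le hM0.le)]
            congr 2
        _ ≤ (∫⁻ s in Set.Ioo (tkr δ k) t,
              ENNReal.ofReal (Real.exp (-(t - s) * M))) * C :=
            mul_le_mul_left hlb C
        _ = ∫⁻ s in Set.Ioo (tkr δ k) t,
              ENNReal.ofReal (Real.exp (-(t - s) * M)) * C :=
            (lintegral_mul_const C hmeas).symm
        _ ≤ ∫⁻ s in Set.Ioo (tkr δ k) t,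
              ENNReal.ofReal (Real.exp (-(t - s) * ‖ξ‖^2)) *
                lconv3 (fun y => ENNReal.ofReal (v s y)) ξ :=
            lintegral_mono_ae ((ae_restrict_iff' measurableSet_Ioo).mpr
              (Filter.Eventually.of_forall hpt))
        _ ≤ ∫⁻ s in Set.Ioo (0:ℝ) t,
              ENNReal.ofReal (Real.exp (-(t - s) * ‖ξ‖^2)) *
                lconv3 (fun y => ENNReal.ofReal (v s y)) ξ :=
            lintegral_mono_set hsub
        _ ≤ _ := le_add_self
  -- conclusion
  have final : ∀ k : ℕ, ENNReal.ofReal ((3:ℝ)^k) ≤ ∫⁻ ξ, ENNReal.ofReal (v (δ/2) ξ) := by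
    intro k
    have h2 : ∫⁻ ξ, ENNReal.ofReal (bseq δ A k) * fseq W k ξ ≤
        ∫⁻ ξ, ENNReal.ofReal (v (δ/2) ξ) :=
      lintegral_mono (key k (δ/2) (htk_le k) le_rfl)
    rw [lintegral_const_mul' _ _ ENNReal.ofReal_ne_top, hf_int k] at h2
    refine le_trans ?_ h2
    rw [← ENNReal.ofReal_pow hI.le, ← ENNReal.ofReal_mul (hb_pos k).le]
    exact ENNReal.ofReal_le_ofReal (key_num k)
  by_contra hne
  obtain ⟨k, hk⟩ := pow_unbounded_of_one_lt
    ((∫⁻ ξ, ENNReal.ofReal (v (δ/2) ξ)).toReal) (by norm_num : (1:ℝ) < 3)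
  have h3 : ((3:ℝ)^k : ℝ) ≤ (∫⁻ ξ, ENNReal.ofReal (v (δ/2) ξ)).toReal := by
    have := ENNReal.toReal_mono hne (final k)
    rwa [ENNReal.toReal_ofReal (by positivity)] at this
  linarith
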